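/- Let N ≥ 2, u, v ∈ ℝ^N (indices mod N), and λ a nonzero real. Define N×N matrices (indices cyclic mod N): U(u,λ) = λ Σ_{k=1}^{N} E_{k+1,k} + Σ_{k=1}^{N} u_k E_{kk}; V(v,λ) = I + λ⁻¹ Σ_{k=1}^{N} v_k E_{k,k+1}; L_1(u,v,λ) = λ Σ_{k=1}^{N} E_{k+1,k} + Σ_{k=1}^{N} (u_k + v_{k−1}) E_{kk} + λ⁻¹ Σ_{k=1}^{N} u_k v_k E_{k,k+1}; L_2(u,v,λ) = λ Σ_{k=1}^{N} E_{k+1,k} + Σ_{k=1}^{N} (u_k + v_k) E_{kk} + λ⁻¹ Σ_{k=1}^{N} u_{k+1} v_k E_{k,k+1}. Then L_1(u,v,λ) = U(u,λ)⬝V(v,λ) and L_2(u,v,λ) = V(v,λ)⬝U(u,λ); consequently det(L_1(u,v,λ) − μ·I_N) = det(L_2(u,v,λ) − μ·I_N) for every μ ∈ ℝ. -/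

import Mathlib

open Matrix

/-- `U(u,λ) = λ Σ_k E_{k+1,k} + Σ_k u_k E_{kk}` (indices cyclic mod N). -/
noncomputable def Umat (N : ℕ) [NeZero N] (u : Fin N → ℝ) (lam : ℝ) :
    Matrix (Fin N) (Fin N) ℝ :=
  lam • (∑ k : Fin N, Matrix.single (k + 1) k 1)
    + ∑ k : Fin N, Matrix.single k k (u k)

/-- `V(v,λ) = I + λ⁻¹ Σ_k v_k E_{k,k+1}` (indices cyclic mod N). -/
noncomputable def Vmat (N : ℕ) [NeZero N] (v : Fin N → ℝ) (lam : ℝ) :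
    Matrix (Fin N) (Fin N) ℝ :=
  1 + lam⁻¹ • ∑ k : Fin N, Matrix.single k (k + 1) (v k)

/-- `L_1(u,v,λ) = λ Σ_k E_{k+1,k} + Σ_k (u_k + v_{k−1}) E_{kk} + λ⁻¹ Σ_k u_k v_k E_{k,k+1}`. -/
noncomputable def L1mat (N : ℕ) [NeZero N] (u v : Fin N → ℝ) (lam : ℝ) :
    Matrix (Fin N) (Fin N) ℝ :=
  lam • (∑ k : Fin N, Matrix.single (k + 1) k 1)
    + (∑ k : Fin N, Matrix.single k k (u k + v (k - 1)))
    + lam⁻¹ • ∑ k : Fin N, Matrix.single k (k + 1) (u k * v k)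

/-- `L_2(u,v,λ) = λ Σ_k E_{k+1,k} + Σ_k (u_k + v_k) E_{kk} + λ⁻¹ Σ_k u_{k+1} v_k E_{k,k+1}`. -/
noncomputable def L2mat (N : ℕ) [NeZero N] (u v : Fin N → ℝ) (lam : ℝ) :
    Matrix (Fin N) (Fin N) ℝ :=
  lam • (∑ k : Fin N, Matrix.single (k + 1) k 1)
    + (∑ k : Fin N, Matrix.single k k (u k + v k))
    + lam⁻¹ • ∑ k : Fin N, Matrix.single k (k + 1) (u (k + 1) * v k)

section Aux

variable {N : ℕ} [NeZero N]

/-- `S * T_v` is the diagonal matrix with entries `v (k-1)`. -/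
lemma aux_S_mul_T (v : Fin N → ℝ) :
    (∑ k : Fin N, Matrix.single (k + 1) k (1:ℝ)) *
      (∑ k : Fin N, Matrix.single k (k + 1) (v k))
    = ∑ k : Fin N, Matrix.single k k (v (k - 1)) := by
  rw [Finset.sum_mul_sum]
  have h1 : ∀ i : Fin N, ∑ j : Fin N,
      Matrix.single (i + 1) i (1:ℝ) * Matrix.single j (j + 1) (v j)
      = Matrix.single (i + 1) (i + 1) (v i) := by
    intro i
    rw [Finset.sum_eq_single i]
    · simp
    · intro j _ hji
      exact Matrix.single_mul_single_of_ne _ _ _ _ (Ne.symm hji) _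
    · simp
  simp_rw [h1]
  refine Fintype.sum_equiv (Equiv.addRight 1) _ _ (fun i => ?_)
  simp

/-- `T_v * S` is the diagonal matrix with entries `v k`. -/
lemma aux_T_mul_S (v : Fin N → ℝ) :
    (∑ k : Fin N, Matrix.single k (k + 1) (v k)) *
      (∑ k : Fin N, Matrix.single (k + 1) k (1:ℝ))
    = ∑ k : Fin N, Matrix.single k k (v k) := by
  rw [Finset.sum_mul_sum]
  have h1 : ∀ i : Fin N, ∑ j : Fin N,
      Matrix.single i (i + 1) (v i) * Matrix.single (j + 1) j (1:ℝ)
      = Matrix.single i i (v i) := by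
    intro i
    rw [Finset.sum_eq_single i]
    · simp
    · intro j _ hji
      refine Matrix.single_mul_single_of_ne _ _ _ _ (fun h => hji ?_) _
      exact add_right_cancel h.symm
    · simp
  simp_rw [h1]

/-- `D_u * T_v = Σ u_k v_k E_{k,k+1}`. -/
lemma aux_D_mul_T (u v : Fin N → ℝ) :
    (∑ k : Fin N, Matrix.single k k (u k)) *
      (∑ k : Fin N, Matrix.single k (k + 1) (v k))
    = ∑ k : Fin N, Matrix.single k (k + 1) (u k * v k) := by
  rw [Finset.sum_mul_sum]
  have h1 : ∀ i : Fin N, ∑ j : Fin N,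
      Matrix.single i i (u i) * Matrix.single j (j + 1) (v j)
      = Matrix.single i (i + 1) (u i * v i) := by
    intro i
    rw [Finset.sum_eq_single i]
    · simp
    · intro j _ hji
      exact Matrix.single_mul_single_of_ne _ _ _ _ (Ne.symm hji) _
    · simp
  simp_rw [h1]

/-- `T_v * D_u = Σ v_k u_{k+1} E_{k,k+1}`. -/
lemma aux_T_mul_D (u v : Fin N → ℝ) :
    (∑ k : Fin N, Matrix.single k (k + 1) (v k)) *
      (∑ k : Fin N, Matrix.single k k (u k))
    = ∑ k : Fin N, Matrix.single k (k + 1) (v k * u (k + 1)) := by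
  rw [Finset.sum_mul_sum]
  have h1 : ∀ i : Fin N, ∑ j : Fin N,
      Matrix.single i (i + 1) (v i) * Matrix.single j j (u j)
      = Matrix.single i (i + 1) (v i * u (i + 1)) := by
    intro i
    rw [Finset.sum_eq_single (i + 1)]
    · simp
    · intro j _ hji
      exact Matrix.single_mul_single_of_ne _ _ _ _ (Ne.symm hji) _
    · simp
  simp_rw [h1]

/-- `det (A*B - μ•1) = det (B*A - μ•1)` for square matrices over ℝ. -/
lemma aux_det_mul_sub_comm (A B : Matrix (Fin N) (Fin N) ℝ) (μ : ℝ) :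
    (A * B - μ • (1 : Matrix (Fin N) (Fin N) ℝ)).det
      = (B * A - μ • (1 : Matrix (Fin N) (Fin N) ℝ)).det := by
  rcases eq_or_ne μ 0 with rfl | hμ
  · simp [Matrix.det_mul, mul_comm]
  · have key : ∀ C : Matrix (Fin N) (Fin N) ℝ,
        C - μ • 1 = (-μ) • (1 + (-μ⁻¹) • C) := by
      intro C
      rw [smul_add, smul_smul, neg_mul_neg, mul_inv_cancel₀ hμ, one_smul, neg_smul,
        sub_eq_neg_add]
    rw [key (A * B), key (B * A), Matrix.det_smul, Matrix.det_smul]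
    congr 1
    have h1 : (1 : Matrix (Fin N) (Fin N) ℝ) + (-μ⁻¹) • (A * B)
        = 1 + ((-μ⁻¹) • A) * B := by rw [Matrix.smul_mul]
    have h2 : (1 : Matrix (Fin N) (Fin N) ℝ) + (-μ⁻¹) • (B * A)
        = 1 + B * ((-μ⁻¹) • A) := by rw [Matrix.mul_smul]
    rw [h1, h2, Matrix.det_one_add_mul_comm]

end Aux

theorem statement18 (N : ℕ) (hN : 2 ≤ N) [NeZero N]
    (u v : Fin N → ℝ) (lam : ℝ) (hlam : lam ≠ 0) :
    L1mat N u v lam = Umat N u lam * Vmat N v lam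
    ∧ L2mat N u v lam = Vmat N v lam * Umat N u lam
    ∧ ∀ μ : ℝ,
        (L1mat N u v lam - μ • (1 : Matrix (Fin N) (Fin N) ℝ)).det
          = (L2mat N u v lam - μ • (1 : Matrix (Fin N) (Fin N) ℝ)).det := by
  set S : Matrix (Fin N) (Fin N) ℝ := ∑ k : Fin N, Matrix.single (k + 1) k (1:ℝ) with hS
  set T : Matrix (Fin N) (Fin N) ℝ := ∑ k : Fin N, Matrix.single k (k + 1) (v k) with hT
  set D : Matrix (Fin N) (Fin N) ℝ := ∑ k : Fin N, Matrix.single k k (u k) with hD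
  have hUV : L1mat N u v lam = Umat N u lam * Vmat N v lam := by
    rw [Umat, Vmat, ← hS, ← hT, ← hD]
    rw [add_mul, mul_add, mul_add, mul_one, mul_one, Matrix.mul_smul, Matrix.mul_smul,
      Matrix.smul_mul, smul_smul, inv_mul_cancel₀ hlam, one_smul, aux_S_mul_T, aux_D_mul_T]
    rw [L1mat, ← hS]
    have hdiag : (∑ k : Fin N, Matrix.single k k (u k + v (k - 1)))
        = D + ∑ k : Fin N, Matrix.single k k (v (k - 1)) := by
      rw [hD, ← Finset.sum_add_distrib]
      exact Finset.sum_congr rfl fun k _ => Matrix.single_add _ _ _ _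
    rw [hdiag]
    abel
  have hVU : L2mat N u v lam = Vmat N v lam * Umat N u lam := by
    rw [Umat, Vmat, ← hS, ← hT, ← hD]
    rw [mul_add, add_mul, add_mul, one_mul, one_mul, Matrix.smul_mul, Matrix.smul_mul,
      Matrix.mul_smul, smul_smul, inv_mul_cancel₀ hlam, one_smul, aux_T_mul_S, aux_T_mul_D]
    rw [L2mat, ← hS]
    have hdiag : (∑ k : Fin N, Matrix.single k k (u k + v k))
        = D + ∑ k : Fin N, Matrix.single k k (v k) := by
      rw [hD, ← Finset.sum_add_distrib]
      exact Finset.sum_congr rfl fun k _ => Matrix.single_add _ _ _ _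
    have hoff : (∑ k : Fin N, Matrix.single k (k + 1) (u (k + 1) * v k))
        = ∑ k : Fin N, Matrix.single k (k + 1) (v k * u (k + 1)) := by
      simp_rw [mul_comm]
    rw [hdiag, hoff]
    abel
  refine ⟨hUV, hVU, fun μ => ?_⟩
  rw [hUV, hVU]
  exact aux_det_mul_sub_comm _ _ μ
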